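/- arXiv:2401.04358 — 4 statements merged into one kernel-verified Lean document; each statement's English description precedes it below -/
import Mathlib

section
/- Let N be a positive even integer. Let Φ be the N×N discrete Fresnel transform matrix with entries Φ_{m,n} = (1/√N)·exp(−i·π/4)·exp(i·π·(m−n)²/N), let Δ be the N×N diagonal matrix with Δ_{n,n} = exp(i·2π·n/N), and let Π be the N×N cyclic-shift permutation matrix with Π_{m,n} = 1 if m ≡ n+1 (mod N) and 0 otherwise. Then Φ·Δ·Φ^H = exp(i·π/N)·Π·Δ, where Φ^H denotes the conjugate transpose of Φ. -/
open Matrix Complex Real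

/-- The N×N discrete Fresnel transform (DFnT) matrix with
Φ_{m,n} = (1/√N)·exp(−i·π/4)·exp(i·π·(m−n)²/N). -/
noncomputable def PhiMat (N : ℕ) : Matrix (Fin N) (Fin N) ℂ :=
  Matrix.of fun m n =>
    (1 / Real.sqrt N : ℂ) * Complex.exp (-(Real.pi / 4) * Complex.I) *
      Complex.exp (Real.pi * Complex.I * (((m : ℕ) : ℤ) - ((n : ℕ) : ℤ)) ^ 2 / N)

/-- The N×N diagonal "Doppler-shift" matrix Δ with Δ_{n,n} = exp(i·2π·n/N). -/
noncomputable def DeltaMat (N : ℕ) : Matrix (Fin N) (Fin N) ℂ :=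
  Matrix.diagonal fun n => Complex.exp (2 * Real.pi * Complex.I * (n : ℕ) / N)

/-- The N×N cyclic-shift permutation matrix Π with Π_{m,n} = 1 if m ≡ n+1 (mod N). -/
def PiMat (N : ℕ) : Matrix (Fin N) (Fin N) ℂ :=
  Matrix.of fun m n => if (m : ℕ) = ((n : ℕ) + 1) % N then 1 else 0

lemma dvd_equiv (N : ℕ) (m k : Fin N) :
    ((m:ℕ) = ((k:ℕ)+1) % N) ↔ (N:ℤ) ∣ (1 + ((k:ℕ):ℤ) - ((m:ℕ):ℤ)) := by
  have hm := m.isLt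
  have h2 : ((m:ℕ):ℤ) % N = ((m:ℕ):ℤ) :=
    Int.emod_eq_of_lt (by positivity) (by exact_mod_cast hm)
  rw [Int.dvd_iff_emod_eq_zero, ← Int.emod_eq_emod_iff_emod_sub_eq_zero, h2]
  constructor
  · intro h
    have : (((((k:ℕ)+1) % N : ℕ)):ℤ) = ((m:ℕ):ℤ) := by exact_mod_cast h.symm
    rw [← this]; push_cast [Int.natCast_mod]; ring_nf
  · intro h
    have : ((m:ℕ):ℤ) = (((((k:ℕ)+1) % N : ℕ)):ℤ) := by
      rw [← h]; push_cast [Int.natCast_mod]; ring_nf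
    exact_mod_cast this

lemma key (N : ℕ) (hN : 0 < N) (m k n : Fin N) :
    PhiMat N m n * Complex.exp (2 * Real.pi * Complex.I * ((n:ℕ):ℂ) / N) *
      (starRingEnd ℂ) (PhiMat N k n)
    = (1 / (N:ℂ)) * Complex.exp (Real.pi * Complex.I *
        ((((m:ℕ):ℤ):ℂ)^2 - (((k:ℕ):ℤ):ℂ)^2) / N) *
      Complex.exp (2 * Real.pi * Complex.I * (1 + (((k:ℕ):ℤ):ℂ) - (((m:ℕ):ℤ):ℂ)) / N) ^ (n:ℕ) := by
  have hNC : (N:ℂ) ≠ 0 := Nat.cast_ne_zero.mpr hN.ne'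
  have hs : (Real.sqrt N : ℂ) * (Real.sqrt N : ℂ) = (N:ℂ) := by
    rw [← Complex.ofReal_mul, Real.mul_self_sqrt (Nat.cast_nonneg N)]
    norm_cast
  simp only [PhiMat, Matrix.of_apply, _root_.map_mul, ← Complex.exp_conj, map_div₀,
    map_pow, map_sub, map_neg, Complex.conj_I, Complex.conj_ofReal, map_natCast,
    map_intCast, _root_.map_one, map_ofNat]
  rw [← Complex.exp_nat_mul]
  calc 1 / (Real.sqrt N:ℂ) * Complex.exp (-(↑Real.pi / 4) * Complex.I) *
        Complex.exp (↑Real.pi * Complex.I * ((((m:ℕ):ℤ):ℂ) - (((n:ℕ):ℤ):ℂ)) ^ 2 / N) *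
        Complex.exp (2 * ↑Real.pi * Complex.I * ((n:ℕ):ℂ) / N) *
        (1 / (Real.sqrt N:ℂ) * Complex.exp (-(↑Real.pi / 4) * -Complex.I) *
          Complex.exp (↑Real.pi * -Complex.I * ((((k:ℕ):ℤ):ℂ) - (((n:ℕ):ℤ):ℂ)) ^ 2 / N))
      = 1 / (N:ℂ) * Complex.exp (-(↑Real.pi / 4) * Complex.I + -(↑Real.pi / 4) * -Complex.I +
          ↑Real.pi * Complex.I * ((((m:ℕ):ℤ):ℂ) - (((n:ℕ):ℤ):ℂ)) ^ 2 / N +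
          2 * ↑Real.pi * Complex.I * ((n:ℕ):ℂ) / N +
          ↑Real.pi * -Complex.I * ((((k:ℕ):ℤ):ℂ) - (((n:ℕ):ℤ):ℂ)) ^ 2 / N) := by
        rw [Complex.exp_add, Complex.exp_add, Complex.exp_add, Complex.exp_add,
          show (1:ℂ)/(N:ℂ) = 1/(Real.sqrt N:ℂ) * (1/(Real.sqrt N:ℂ)) by
            rw [div_mul_div_comm, hs, one_mul]]
        ring
    _ = 1 / (N:ℂ) * Complex.exp (↑Real.pi * Complex.I *
          ((((m:ℕ):ℤ):ℂ)^2 - (((k:ℕ):ℤ):ℂ)^2) / N +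
          ((n:ℕ):ℂ) * (2 * ↑Real.pi * Complex.I * (1 + (((k:ℕ):ℤ):ℂ) - (((m:ℕ):ℤ):ℂ)) / N)) := by
        congr 1
        push_cast
        field_simp
        ring
    _ = _ := by rw [Complex.exp_add]; ring

theorem stmt2 (N : ℕ) (hN : 0 < N) (hNeven : Even N) :
    PhiMat N * DeltaMat N * (PhiMat N)ᴴ =
      Complex.exp (Real.pi * Complex.I / N) • (PiMat N * DeltaMat N) := by
  have hNC : (N:ℂ) ≠ 0 := Nat.cast_ne_zero.mpr hN.ne'
  have hNZ : (0:ℤ) < (N:ℤ) := by exact_mod_cast hN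
  have h2pi : (2:ℂ) * (Real.pi:ℂ) * Complex.I ≠ 0 := by
    simp [Real.pi_ne_zero, Complex.I_ne_zero, Complex.ofReal_ne_zero]
  ext m k
  have hmlt : (((m:ℕ):ℤ)) < (N:ℤ) := by exact_mod_cast m.isLt
  have hklt : (((k:ℕ):ℤ)) < (N:ℤ) := by exact_mod_cast k.isLt
  have hm0 : (0:ℤ) ≤ ((m:ℕ):ℤ) := Int.natCast_nonneg _
  have hk0 : (0:ℤ) ≤ ((k:ℕ):ℤ) := Int.natCast_nonneg _
  set ζ : ℂ := Complex.exp (2 * Real.pi * Complex.I *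
      (1 + (((k:ℕ):ℤ):ℂ) - (((m:ℕ):ℤ):ℂ)) / N) with hζ
  have lhs_eq : (PhiMat N * DeltaMat N * (PhiMat N)ᴴ) m k
      = (1 / (N:ℂ)) * Complex.exp (Real.pi * Complex.I *
          ((((m:ℕ):ℤ):ℂ)^2 - (((k:ℕ):ℤ):ℂ)^2) / N) *
        ∑ i ∈ Finset.range N, ζ ^ i := by
    rw [Matrix.mul_apply]
    simp only [DeltaMat, Matrix.mul_diagonal, Matrix.conjTranspose_apply, RCLike.star_def]
    rw [Finset.sum_congr rfl (fun n _ => key N hN m k n), ← Finset.mul_sum]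
    congr 1
    exact Fin.sum_univ_eq_sum_range (fun i => ζ ^ i) N
  rw [lhs_eq]
  simp only [Matrix.smul_apply, DeltaMat, PiMat, Matrix.mul_diagonal, Matrix.of_apply,
    smul_eq_mul]
  by_cases h : (m:ℕ) = ((k:ℕ)+1) % N
  · -- shifted diagonal case
    obtain ⟨t, ht⟩ := (dvd_equiv N m k).mp h
    have hζ1 : ζ = 1 := by
      rw [hζ, show (2 * (Real.pi:ℂ) * Complex.I *
            (1 + (((k:ℕ):ℤ):ℂ) - (((m:ℕ):ℤ):ℂ)) / N)
          = (t:ℂ) * (2 * Real.pi * Complex.I) by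
        have hcast := congrArg (fun z : ℤ => (z:ℂ)) ht
        push_cast at hcast ⊢
        field_simp
        linear_combination hcast]
      exact Complex.exp_int_mul_two_pi_mul_I t
    rw [hζ1, if_pos h]
    simp only [one_pow, Finset.sum_const, Finset.card_range, nsmul_eq_mul, mul_one, one_mul]
    rw [show (1:ℂ)/(N:ℂ) * Complex.exp (Real.pi * Complex.I *
          ((((m:ℕ):ℤ):ℂ)^2 - (((k:ℕ):ℤ):ℂ)^2) / N) * N
        = Complex.exp (Real.pi * Complex.I *
          ((((m:ℕ):ℤ):ℂ)^2 - (((k:ℕ):ℤ):ℂ)^2) / N) by field_simp]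
    rw [← Complex.exp_add]
    obtain ⟨p, hp⟩ := hNeven
    have htval : t = 0 ∨ t = 1 := by
      have hb1 : -(N:ℤ) < (N:ℤ) * t := by omega
      have hb2 : (N:ℤ) * t ≤ (N:ℤ) * 1 := by omega
      have ht1 : t ≤ 1 := le_of_mul_le_mul_left hb2 hNZ
      have ht0 : (0:ℤ) ≤ t := by
        by_contra hc
        push_neg at hc
        have : (N:ℤ) * t ≤ (N:ℤ) * (-1) := by
          apply mul_le_mul_of_nonneg_left (by omega) (le_of_lt hNZ)
        omega
      omega
    rw [Complex.exp_eq_exp_iff_exists_int]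
    rcases htval with ht0 | ht1
    · refine ⟨0, ?_⟩
      rw [ht0, mul_zero] at ht
      have hMK : ((m:ℕ):ℤ) = 1 + ((k:ℕ):ℤ) := by omega
      have hMC : (((m:ℕ):ℤ):ℂ) = 1 + (((k:ℕ):ℤ):ℂ) := by exact_mod_cast hMK
      push_cast at hMC ⊢
      rw [hMC]
      field_simp
      ring
    · refine ⟨(p:ℤ) - (((k:ℕ):ℤ) + 1), ?_⟩
      rw [ht1, mul_one] at ht
      have hMK : ((m:ℕ):ℤ) = 1 + ((k:ℕ):ℤ) - 2 * (p:ℤ) := by omega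
      have hMC : (((m:ℕ):ℤ):ℂ) = 1 + (((k:ℕ):ℤ):ℂ) - 2 * ((p:ℤ):ℂ) := by exact_mod_cast hMK
      have hNp : (N:ℂ) = 2 * ((p:ℕ):ℂ) := by
        rw [show (N:ℕ) = 2 * p by omega]; push_cast; ring
      push_cast at hMC hNp ⊢
      rw [hMC, hNp]
      have hpC : ((p:ℕ):ℂ) ≠ 0 := by
        have : 0 < p := by omega
        exact Nat.cast_ne_zero.mpr this.ne'
      field_simp
      ring
  · -- off-diagonal case: geometric sum vanishes
    rw [if_neg h]
    have hdvd : ¬ (N:ℤ) ∣ (1 + ((k:ℕ):ℤ) - ((m:ℕ):ℤ)) :=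
      fun hd => h ((dvd_equiv N m k).mpr hd)
    have hζN : ζ ^ N = 1 := by
      rw [hζ, ← Complex.exp_nat_mul,
        show (N:ℂ) * (2 * Real.pi * Complex.I *
            (1 + (((k:ℕ):ℤ):ℂ) - (((m:ℕ):ℤ):ℂ)) / N)
          = ((1 + ((k:ℕ):ℤ) - ((m:ℕ):ℤ) : ℤ):ℂ) * (2 * Real.pi * Complex.I) by
            push_cast; field_simp]
      exact Complex.exp_int_mul_two_pi_mul_I _
    have hζne : ζ ≠ 1 := by
      intro hone
      rw [hζ, Complex.exp_eq_one_iff] at hone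
      obtain ⟨s, hs⟩ := hone
      apply hdvd
      refine ⟨s, ?_⟩
      have hC : (1:ℂ) + (((k:ℕ):ℤ):ℂ) - (((m:ℕ):ℤ):ℂ) = (N:ℂ) * (s:ℂ) := by
        field_simp at hs
        apply mul_left_cancel₀ h2pi
        linear_combination (2 * (Real.pi:ℂ) * Complex.I) * hs
      exact_mod_cast hC
    rw [geom_sum_eq hζne, hζN]
    simp
end

section
/- Let N be a positive even integer. Let Φ be the N×N discrete Fresnel transform matrix with entries Φ_{m,n} = (1/√N)·exp(−i·π/4)·exp(i·π·(m−n)²/N), and let Δ be the N×N diagonal matrix with Δ_{n,n} = exp(i·2π·n/N). Then for all m, n in {0,…,N−1}, the (m,n) entry of Φ·Δ·Φ^H equals exp(i·π·(m²−n²)/N) if m ≡ n+1 (mod N), and equals 0 otherwise. -/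
open Matrix Complex Real

theorem stmt3 (N : ℕ) (hN : 0 < N) (hNeven : Even N) (m n : Fin N) :
    (PhiMat N * DeltaMat N * (PhiMat N)ᴴ) m n =
      if (m : ℕ) = ((n : ℕ) + 1) % N then
        Complex.exp (Real.pi * Complex.I * ((((m : ℕ) : ℤ) ^ 2 - ((n : ℕ) : ℤ) ^ 2)) / N)
      else 0 := by
  have hNz : (N : ℂ) ≠ 0 := Nat.cast_ne_zero.mpr hN.ne'
  set a : ℤ := 1 + (n : ℕ) - (m : ℕ) with ha
  have key : (PhiMat N * DeltaMat N * (PhiMat N)ᴴ) m n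
      = ∑ k : Fin N, ((1 / (N : ℂ)) *
          Complex.exp (Real.pi * Complex.I * ((((m : ℕ) : ℤ) ^ 2 - ((n : ℕ) : ℤ) ^ 2)) / N)) *
          Complex.exp (2 * Real.pi * Complex.I * (a : ℂ) * ((k : ℕ) : ℂ) / N) := by
    rw [Matrix.mul_apply]
    refine Finset.sum_congr rfl fun k _ => ?_
    simp only [DeltaMat]
    rw [Matrix.mul_diagonal, Matrix.conjTranspose_apply]
    simp only [PhiMat, DeltaMat, Matrix.of_apply, Complex.star_def, _root_.map_mul, map_div₀,
      _root_.map_one, map_neg, Complex.conj_I, Complex.conj_ofReal, ← Complex.exp_conj,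
      map_pow, map_sub, map_intCast, map_natCast, map_ofNat]
    have h1 : (1 / (Real.sqrt N : ℂ)) * (1 / (Real.sqrt N : ℂ)) = 1 / N := by
      rw [div_mul_div_comm, one_mul, ← Complex.ofReal_mul,
        Real.mul_self_sqrt (Nat.cast_nonneg N)]
      push_cast
      ring
    calc ((1 / (Real.sqrt N : ℂ)) * Complex.exp (-(Real.pi / 4) * Complex.I) *
          Complex.exp (Real.pi * Complex.I * (((m : ℕ) : ℤ) - ((k : ℕ) : ℤ)) ^ 2 / N)) *
          Complex.exp (2 * Real.pi * Complex.I * ((k : ℕ) : ℂ) / N) *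
          ((1 / (Real.sqrt N : ℂ)) * Complex.exp (-(Real.pi / 4) * -Complex.I) *
          Complex.exp (Real.pi * -Complex.I * (((n : ℕ) : ℤ) - ((k : ℕ) : ℤ)) ^ 2 / N))
        = ((1 / (Real.sqrt N : ℂ)) * (1 / (Real.sqrt N : ℂ))) *
          Complex.exp ((-(Real.pi / 4) * Complex.I)
            + (Real.pi * Complex.I * (((m : ℕ) : ℤ) - ((k : ℕ) : ℤ)) ^ 2 / N)
            + (2 * Real.pi * Complex.I * ((k : ℕ) : ℂ) / N)
            + (-(Real.pi / 4) * -Complex.I)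
            + (Real.pi * -Complex.I * (((n : ℕ) : ℤ) - ((k : ℕ) : ℤ)) ^ 2 / N)) := by
          rw [Complex.exp_add, Complex.exp_add, Complex.exp_add, Complex.exp_add]; ring
      _ = (1 / (N : ℂ)) *
          Complex.exp ((Real.pi * Complex.I * ((((m : ℕ) : ℤ) ^ 2 - ((n : ℕ) : ℤ) ^ 2)) / N)
            + (2 * Real.pi * Complex.I * (a : ℂ) * ((k : ℕ) : ℂ) / N)) := by
          rw [h1]
          congr 1
          simp only [ha]
          push_cast
          ring
      _ = _ := by rw [Complex.exp_add]; ring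
  set ζ : ℂ := Complex.exp (2 * Real.pi * Complex.I * (a : ℂ) / N) with hζ
  have hterm : ∀ k : Fin N,
      Complex.exp (2 * Real.pi * Complex.I * (a : ℂ) * ((k : ℕ) : ℂ) / N) = ζ ^ (k : ℕ) := by
    intro k
    rw [hζ, ← Complex.exp_nat_mul]
    congr 1
    ring
  have hζN : ζ ^ N = 1 := by
    rw [hζ, ← Complex.exp_nat_mul]
    have : (N : ℂ) * (2 * Real.pi * Complex.I * (a : ℂ) / N) = (a : ℂ) * (2 * Real.pi * Complex.I) := by
      field_simp
    rw [this, Complex.exp_int_mul_two_pi_mul_I]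
  have hsum : ∑ k : Fin N, Complex.exp (2 * Real.pi * Complex.I * (a : ℂ) * ((k : ℕ) : ℂ) / N)
      = if (m : ℕ) = ((n : ℕ) + 1) % N then (N : ℂ) else 0 := by
    simp only [hterm]
    rw [Fin.sum_univ_eq_sum_range (fun k => ζ ^ k) N]
    by_cases h : (m : ℕ) = ((n : ℕ) + 1) % N
    · have hm : m < N := m.isLt
      have hn : n < N := n.isLt
      have haval : a = 0 ∨ a = N := by
        rcases Nat.lt_or_ge ((n : ℕ) + 1) N with hlt | hge
        · left
          rw [Nat.mod_eq_of_lt hlt] at h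
          omega
        · right
          have hnN : (n : ℕ) + 1 = N := by omega
          rw [hnN, Nat.mod_self] at h
          omega
      have hζ1 : ζ = 1 := by
        rcases haval with h0 | hNa
        · rw [hζ, h0]; norm_num
        · rw [hζ, hNa]
          push_cast
          rw [show 2 * (Real.pi : ℂ) * Complex.I * (N : ℂ) / N = 2 * Real.pi * Complex.I by
            field_simp]
          exact Complex.exp_two_pi_mul_I
      simp [h, hζ1]
    · have hζ1 : ζ ≠ 1 := by
        intro hone
        rw [hζ, Complex.exp_eq_one_iff] at hone
        obtain ⟨j, hj⟩ := hone
        have hja : (a : ℂ) = (j : ℂ) * N := by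
          have h2 : (2 * (Real.pi : ℂ) * Complex.I) ≠ 0 := by
            simp [Real.pi_ne_zero, Complex.I_ne_zero, Complex.ofReal_ne_zero]
          field_simp at hj
          apply mul_left_cancel₀ h2
          linear_combination (2 * (Real.pi : ℂ) * Complex.I) * hj
        have hjZ : a = j * N := by exact_mod_cast hja
        have hmZ : ((m : ℕ) : ℤ) < N := by exact_mod_cast m.isLt
        have hnZ : ((n : ℕ) : ℤ) < N := by exact_mod_cast n.isLt
        have hNZ : (0 : ℤ) < N := by exact_mod_cast hN
        have hmZ0 : (0 : ℤ) ≤ ((m : ℕ) : ℤ) := Int.ofNat_nonneg _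
        have hnZ0 : (0 : ℤ) ≤ ((n : ℕ) : ℤ) := Int.ofNat_nonneg _
        have hub : j * N ≤ N := by rw [← hjZ, ha]; omega
        have hlb : -N < j * N := by rw [← hjZ, ha]; omega
        have hj01 : j = 0 ∨ j = 1 := by
          have hle : j ≤ 1 := by nlinarith
          have hge : 0 ≤ j := by nlinarith
          omega
        apply h
        rcases hj01 with h0 | h1
        · rw [h0, zero_mul] at hjZ
          have hmn : (m : ℕ) = (n : ℕ) + 1 := by omega
          have hlt : (n : ℕ) + 1 < N := by omega
          rw [Nat.mod_eq_of_lt hlt, hmn]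
        · rw [h1, one_mul] at hjZ
          have hn1 : (n : ℕ) + 1 = N ∧ (m : ℕ) = 0 := by
            constructor <;> omega
          rw [hn1.1, Nat.mod_self, hn1.2]
      rw [geom_sum_eq hζ1, hζN, sub_self, zero_div]
      simp [h]
  rw [key, ← Finset.mul_sum, hsum]
  by_cases h : (m : ℕ) = ((n : ℕ) + 1) % N
  · simp only [h, if_true]
    field_simp
  · simp [h]
end

section
/- Let N be a positive even integer and k, l integers. Let Φ be the N×N discrete Fresnel transform matrix with entries Φ_{m,n} = (1/√N)·exp(−i·π/4)·exp(i·π·(m−n)²/N), let Δ be the N×N diagonal matrix with Δ_{n,n} = exp(i·2π·n/N), and let Π be the N×N cyclic-shift permutation matrix with Π_{m,n} = 1 if m ≡ n+1 (mod N) and 0 otherwise. Then Φ·Δ^k·Π^l·Φ^H = exp(−i·π·k²/N)·Δ^k·Π^{k+l}, where the matrix powers are integer (possibly negative) powers of the invertible matrices Δ and Π, and Φ^H is the conjugate transpose of Φ. -/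
open Matrix Complex Real

section helpers
set_option linter.unusedSectionVars false

lemma exp_congr (N : ℕ) (hN : 0 < N) {a b : ℤ} (h : ((2*N : ℤ)) ∣ (a - b)) :
    Complex.exp (Real.pi * I * a / N) = Complex.exp (Real.pi * I * b / N) := by
  obtain ⟨t, ht⟩ := h
  have hNC : (N:ℂ) ≠ 0 := Nat.cast_ne_zero.mpr hN.ne'
  have ha : (a:ℂ) = b + 2*N*t := by
    have : (a:ℤ) = b + 2*N*t := by linarith
    exact_mod_cast congrArg (Int.cast : ℤ → ℂ) this
  rw [ha]
  have : Real.pi * I * ((b:ℂ) + 2*N*t) / N = Real.pi * I * b / N + t * (2*Real.pi*I) := by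
    field_simp
  rw [this, Complex.exp_add, Complex.exp_int_mul_two_pi_mul_I, mul_one]

lemma sq_congr' (N : ℕ) (hNeven : Even N) {a b : ℤ} (h : ((N:ℤ)) ∣ (a - b)) :
    ((2*N : ℤ)) ∣ (a^2 - b^2) := by
  obtain ⟨M, hM⟩ := hNeven
  obtain ⟨t, ht⟩ := h
  have hN : (N:ℤ) = M + M := by exact_mod_cast hM
  have hab : a = b + N*t := by linarith
  subst hab
  exact ⟨b*t + M*t^2, by rw [hN]; ring⟩

lemma exp_congr_sq (N : ℕ) (hN : 0 < N) (hNe : Even N) {a b : ℤ} (h : (N:ℤ) ∣ (a - b)) :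
    Complex.exp (Real.pi * I * ((a:ℤ):ℂ)^2 / N) = Complex.exp (Real.pi * I * ((b:ℤ):ℂ)^2 / N) := by
  have h2 := exp_congr N hN (sq_congr' N hNe h)
  push_cast at h2
  exact h2

variable {N : ℕ} [NeZero N]

lemma fin_val_add_one (n : Fin N) : ((n + 1 : Fin N) : ℕ) = ((n:ℕ) + 1) % N := by
  rw [Fin.val_add]
  rw [Fin.val_one' N, Nat.add_mod (n:ℕ) (1 % N) N, Nat.mod_mod_of_dvd 1 dvd_rfl,
    ← Nat.add_mod (n:ℕ) 1 N]

lemma piMat_apply (m n : Fin N) : PiMat N m n = if m = n + 1 then 1 else 0 := by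
  simp only [PiMat, Matrix.of_apply, Fin.ext_iff, fin_val_add_one]

lemma piMat_mul_apply (M : Matrix (Fin N) (Fin N) ℂ) (m n : Fin N) :
    (PiMat N * M) m n = M (m - 1) n := by
  rw [Matrix.mul_apply]
  have h : ∀ j : Fin N, PiMat N m j * M j n = if j = m - 1 then M j n else 0 := by
    intro j
    rw [piMat_apply]
    by_cases h : j = m - 1
    · subst h
      rw [if_pos (by rw [sub_add_cancel]), if_pos rfl, one_mul]
    · rw [if_neg (fun hc => h (by rw [hc]; rw [add_sub_cancel_right]) ), if_neg h, zero_mul]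
  rw [Finset.sum_congr rfl (fun j _ => h j), Finset.sum_ite_eq' Finset.univ (m-1) (fun j => M j n),
    if_pos (Finset.mem_univ _)]

lemma mul_piMat_apply (M : Matrix (Fin N) (Fin N) ℂ) (m n : Fin N) :
    (M * PiMat N) m n = M m (n + 1) := by
  rw [Matrix.mul_apply]
  simp only [piMat_apply, mul_ite, mul_one, mul_zero]
  rw [Finset.sum_ite_eq' Finset.univ (n+1) (fun j => M m j), if_pos (Finset.mem_univ _)]

lemma pi_mul_piT : PiMat N * (PiMat N)ᵀ = 1 := by
  apply Matrix.ext; intro m n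
  rw [piMat_mul_apply, Matrix.transpose_apply, piMat_apply, Matrix.one_apply]
  rw [sub_add_cancel]
  exact if_congr ⟨Eq.symm, Eq.symm⟩ rfl rfl

lemma fin_val_mod (a : ℕ) : (N:ℤ) ∣ ((a % N : ℕ) : ℤ) - (a : ℤ) := by
  rw [Int.natCast_mod]
  have hm : (a:ℤ) % (N:ℤ) ≡ (a:ℤ) [ZMOD (N:ℤ)] := Int.emod_emod_of_dvd a dvd_rfl
  exact dvd_sub_comm.mp hm.dvd

lemma fin_add_one_int (n : Fin N) :
    (N:ℤ) ∣ (((n + 1 : Fin N) : ℕ) : ℤ) - (((n:ℕ):ℤ) + 1) := by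
  rw [fin_val_add_one]
  have h := fin_val_mod (N := N) ((n:ℕ) + 1)
  have h2 : ((((n:ℕ) + 1 : ℕ)) : ℤ) = ((n:ℕ):ℤ) + 1 := by push_cast; ring
  rw [h2] at h
  exact h

lemma fin_sub_one_int (m : Fin N) :
    (N:ℤ) ∣ (((m - 1 : Fin N) : ℕ) : ℤ) - (((m:ℕ):ℤ) - 1) := by
  have h := fin_add_one_int (m - 1)
  rw [sub_add_cancel] at h
  obtain ⟨t, ht⟩ := h
  exact ⟨-t, by push_cast at ht ⊢; linarith⟩

end helpers

lemma phi_mul_pi (N : ℕ) (hN : 0 < N) (hNe : Even N) :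
    PhiMat N * PiMat N = PiMat N * PhiMat N := by
  haveI : NeZero N := ⟨hN.ne'⟩
  apply Matrix.ext; intro m n
  rw [mul_piMat_apply, piMat_mul_apply]
  simp only [PhiMat, Matrix.of_apply]
  congr 1
  have key := exp_congr_sq N hN hNe
    (a := ((m:ℕ):ℤ) - (((n+1 : Fin N):ℕ):ℤ)) (b := (((m-1 : Fin N):ℕ):ℤ) - ((n:ℕ):ℤ)) ?_
  · push_cast at key ⊢
    exact key
  · obtain ⟨t, ht⟩ := fin_add_one_int n
    obtain ⟨s, hs⟩ := fin_sub_one_int m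
    exact ⟨-t - s, by push_cast at ht hs ⊢; linarith⟩

lemma pi_mul_delta (N : ℕ) (hN : 0 < N) :
    PiMat N * DeltaMat N = Complex.exp (-(2*Real.pi*I/N)) • (DeltaMat N * PiMat N) := by
  haveI : NeZero N := ⟨hN.ne'⟩
  apply Matrix.ext; intro m n
  rw [Matrix.smul_apply, piMat_mul_apply, DeltaMat, Matrix.diagonal_mul, Matrix.diagonal_apply,
    piMat_apply]
  by_cases h : m = n + 1
  · subst h
    rw [if_pos (by rw [add_sub_cancel_right]), if_pos rfl, mul_one, add_sub_cancel_right]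
    rw [smul_eq_mul, ← Complex.exp_add]
    have e1 : (2*(Real.pi:ℂ)*I*((n:ℕ):ℂ)/N) = Real.pi*I*(((2*((n:ℕ):ℤ) : ℤ)):ℂ)/N := by
      push_cast; ring
    have e2 : (-(2*(Real.pi:ℂ)*I/N) + 2*Real.pi*I*((((n+1:Fin N):ℕ)):ℂ)/N)
        = Real.pi*I*((((-2 + 2*((((n+1:Fin N):ℕ)):ℤ)) : ℤ)):ℂ)/N := by
      push_cast; ring
    rw [e1, e2]
    apply exp_congr N hN
    obtain ⟨t, ht⟩ := fin_add_one_int n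
    exact ⟨-t, by linarith⟩
  · have h' : ¬(m - 1 = n) := fun hc => h (by rw [← hc, sub_add_cancel])
    rw [if_neg h', if_neg h, mul_zero, smul_zero]

set_option maxHeartbeats 1000000 in
lemma phi_mul_delta (N : ℕ) (hN : 0 < N) (hNe : Even N) :
    PhiMat N * DeltaMat N =
      Complex.exp (-(Real.pi*I/N)) • (DeltaMat N * (PiMat N * PhiMat N)) := by
  haveI : NeZero N := ⟨hN.ne'⟩
  apply Matrix.ext; intro m n
  rw [Matrix.smul_apply, DeltaMat, Matrix.mul_diagonal, Matrix.diagonal_mul, piMat_mul_apply,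
    smul_eq_mul]
  simp only [PhiMat, Matrix.of_apply]
  set c0 : ℂ := (1 / Real.sqrt N : ℂ) * Complex.exp (-(Real.pi / 4) * Complex.I) with hc0
  set X : ℤ := (((m:ℕ):ℤ) - ((n:ℕ):ℤ))^2 + 2*((n:ℕ):ℤ) with hX
  set Y : ℤ := -1 + 2*((m:ℕ):ℤ) + ((((m-1:Fin N):ℕ):ℤ) - ((n:ℕ):ℤ))^2 with hY
  have hdvd : ((2*N:ℤ)) ∣ (X - Y) := by
    obtain ⟨s, hs⟩ := fin_sub_one_int m
    obtain ⟨t, ht⟩ := sq_congr' N hNe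
      (a := (((m-1:Fin N):ℕ):ℤ) - ((n:ℕ):ℤ)) (b := ((m:ℕ):ℤ) - 1 - ((n:ℕ):ℤ)) ⟨s, by linarith⟩
    exact ⟨-t, by rw [hX, hY]; linear_combination -ht⟩
  calc c0 * Complex.exp (Real.pi * Complex.I * (((m:ℕ):ℂ) - ((n:ℕ):ℂ)) ^ 2 / N) *
        Complex.exp (2*Real.pi*I*((n:ℕ):ℂ)/N)
      = c0 * Complex.exp (Real.pi * I * ((X:ℤ):ℂ) / N) := by
        rw [mul_assoc, ← Complex.exp_add]
        exact congrArg (c0 * ·) (congrArg Complex.exp (by rw [hX]; push_cast; ring))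
    _ = c0 * Complex.exp (-(Real.pi*I/N) + (2*Real.pi*I*((m:ℕ):ℂ)/N
          + Real.pi * Complex.I * ((((m-1:Fin N):ℕ):ℂ) - ((n:ℕ):ℂ)) ^ 2 / N)) := by
        refine congrArg (c0 * ·) ((exp_congr N hN hdvd).trans
          (congrArg Complex.exp ?_))
        rw [hY]; push_cast; ring
    _ = Complex.exp (-(Real.pi*I/N)) * (Complex.exp (2*Real.pi*I*((m:ℕ):ℂ)/N) *
          (c0 * Complex.exp (Real.pi * Complex.I * ((((m-1:Fin N):ℕ):ℂ) - ((n:ℕ):ℂ)) ^ 2 / N))) := by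
        rw [Complex.exp_add, Complex.exp_add]; ring

lemma conj_exp_quad (N : ℕ) (a : ℤ) :
    (starRingEnd ℂ) (Complex.exp (Real.pi * I * ((a:ℤ):ℂ)^2 / N)) =
      Complex.exp (-(Real.pi * I * ((a:ℤ):ℂ)^2 / N)) := by
  rw [← Complex.exp_conj]
  congr 1
  simp [map_div₀, Complex.conj_I]
  ring
lemma phi_mul_phiH (N : ℕ) (hN : 0 < N) : PhiMat N * (PhiMat N)ᴴ = 1 := by
  have hNR : (0:ℝ) < N := Nat.cast_pos.mpr hN
  have hNC : (N:ℂ) ≠ 0 := Nat.cast_ne_zero.mpr hN.ne'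
  apply Matrix.ext; intro m n
  rw [Matrix.mul_apply, Matrix.one_apply]
  have hterm : ∀ j : Fin N, PhiMat N m j * (PhiMat N)ᴴ j n
      = (1/(N:ℂ)) * Complex.exp (Real.pi*I*((((m:ℕ):ℤ):ℂ)-((j:ℕ):ℤ))^2/N
          - Real.pi*I*((((n:ℕ):ℤ):ℂ)-((j:ℕ):ℤ))^2/N) := by
    intro j
    simp only [PhiMat, conjTranspose_apply, of_apply]
    rw [show (star : ℂ → ℂ) = (starRingEnd ℂ) from rfl, _root_.map_mul, _root_.map_mul]
    have h1 : (starRingEnd ℂ) ((1 / Real.sqrt N : ℂ)) = (1 / Real.sqrt N : ℂ) := by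
      simp [map_div₀, Complex.conj_ofReal]
    have h2 : (starRingEnd ℂ) (Complex.exp (-(Real.pi / 4) * Complex.I)) =
        Complex.exp ((Real.pi / 4) * Complex.I) := by
      rw [← Complex.exp_conj]; congr 1
      simp [Complex.conj_I, Complex.conj_ofReal, map_div₀, map_ofNat]
    have h3 := conj_exp_quad N (((n:ℕ):ℤ) - ((j:ℕ):ℤ))
    push_cast at h3 ⊢
    rw [h1, h2, h3]
    have h4 : ((1:ℂ)/Real.sqrt N) * (1/Real.sqrt N) = 1/(N:ℂ) := by
      rw [div_mul_div_comm, one_mul, ← Complex.ofReal_mul,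
        Real.mul_self_sqrt hNR.le]
      push_cast
      ring
    have h5 : Complex.exp (-(Real.pi/4)*I) * Complex.exp ((Real.pi/4)*I) = 1 := by
      rw [← Complex.exp_add]; ring_nf; exact Complex.exp_zero
    calc (1/(Real.sqrt N):ℂ) * Complex.exp (-(Real.pi/4)*I) * Complex.exp (Real.pi*I*((((m:ℕ):ℤ):ℂ)-((j:ℕ):ℤ))^2/N)
          * ((1/(Real.sqrt N):ℂ) * Complex.exp ((Real.pi/4)*I) * Complex.exp (-(Real.pi*I*((((n:ℕ):ℤ):ℂ)-((j:ℕ):ℤ))^2/N)))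
        = ((1/(Real.sqrt N):ℂ) * (1/(Real.sqrt N):ℂ)) * ((Complex.exp (-(Real.pi/4)*I) * Complex.exp ((Real.pi/4)*I)) * (Complex.exp (Real.pi*I*((((m:ℕ):ℤ):ℂ)-((j:ℕ):ℤ))^2/N) * Complex.exp (-(Real.pi*I*((((n:ℕ):ℤ):ℂ)-((j:ℕ):ℤ))^2/N)))) := by push_cast; ring
      _ = (1/(N:ℂ)) * Complex.exp (Real.pi*I*((((m:ℕ):ℤ):ℂ)-((j:ℕ):ℤ))^2/N - Real.pi*I*((((n:ℕ):ℤ):ℂ)-((j:ℕ):ℤ))^2/N) := by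
          rw [h4, h5, one_mul, ← Complex.exp_add]; push_cast; ring_nf
  rw [Finset.sum_congr rfl (fun j _ => hterm j)]
  by_cases hmn : m = n
  · subst hmn
    simp only [sub_self, Complex.exp_zero, mul_one, Finset.sum_const, Finset.card_univ,
      Fintype.card_fin, if_pos rfl, ↓reduceIte]
    rw [nsmul_eq_mul]
    field_simp
  · rw [if_neg hmn]
    set ζ : ℂ := Complex.exp (-(2*Real.pi*I*((((m:ℕ):ℤ):ℂ)-((n:ℕ):ℤ))/N)) with hζ
    have hexp : ∀ j : Fin N,
        Complex.exp (Real.pi*I*((((m:ℕ):ℤ):ℂ)-((j:ℕ):ℤ))^2/N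
          - Real.pi*I*((((n:ℕ):ℤ):ℂ)-((j:ℕ):ℤ))^2/N)
        = Complex.exp (Real.pi*I*(((((m:ℕ):ℤ):ℂ))^2-((((n:ℕ):ℤ):ℂ))^2)/N) * ζ ^ (j:ℕ) := by
      intro j
      rw [hζ, ← Complex.exp_nat_mul, ← Complex.exp_add]
      congr 1
      push_cast
      field_simp
      ring
    rw [Finset.sum_congr rfl (fun j _ => by rw [hexp j])]
    rw [← Finset.mul_sum, ← Finset.mul_sum]
    have hsum : ∑ j : Fin N, ζ ^ (j:ℕ) = 0 := by
      rw [Fin.sum_univ_eq_sum_range (fun i => ζ ^ i)]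
      have hζ1 : ζ ≠ 1 := by
        intro h
        rw [hζ, Complex.exp_eq_one_iff] at h
        obtain ⟨t, ht⟩ := h
        field_simp at ht
        have h2pi : (2*(Real.pi:ℂ)*I) ≠ 0 := by
          simp [Real.pi_ne_zero, Complex.I_ne_zero]
        have hd : (((m:ℕ):ℤ) - ((n:ℕ):ℤ) : ℤ) = N * (-t) := by
          have hc : ((((m:ℕ):ℤ) - ((n:ℕ):ℤ) : ℤ) : ℂ) = ((N * (-t) : ℤ) : ℂ) := by
            apply mul_left_cancel₀ h2pi
            push_cast
            linear_combination (-(2*(Real.pi:ℂ)*I)) * ht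
          exact_mod_cast hc
        have h1 : (((m:ℕ):ℤ) - ((n:ℕ):ℤ) : ℤ) = 0 :=
          Int.eq_zero_of_abs_lt_dvd ⟨-t, hd⟩
            (by have := m.isLt; have := n.isLt; rw [abs_lt]; constructor <;> omega)
        exact hmn (Fin.ext (by omega))
      have hζN : ζ ^ N = 1 := by
        rw [hζ, ← Complex.exp_nat_mul]
        have : (N:ℂ) * (-(2*Real.pi*I*((((m:ℕ):ℤ):ℂ)-((n:ℕ):ℤ))/N)) =
            ((((n:ℕ):ℤ) - ((m:ℕ):ℤ) : ℤ):ℂ) * (2*Real.pi*I) := by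
          push_cast; field_simp; ring
        rw [this, Complex.exp_int_mul_two_pi_mul_I]
      rw [geom_sum_eq hζ1, hζN, sub_self, zero_div]
    rw [hsum, mul_zero, mul_zero]

section grouppart

variable {N : ℕ}

abbrev RMat (N : ℕ) := Matrix (Fin N) (Fin N) ℂ

noncomputable def Smap (N : ℕ) : ℂˣ →* (RMat N)ˣ :=
  Units.map (algebraMap ℂ (RMat N)).toMonoidHom

noncomputable def Eu : ℂ → ℂˣ := fun z => Units.mk0 (Complex.exp z) (Complex.exp_ne_zero z)

lemma Eu_add (a b : ℂ) : Eu (a + b) = Eu a * Eu b := Units.ext (Complex.exp_add a b)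

lemma Eu_inv (a : ℂ) : (Eu a)⁻¹ = Eu (-a) := by
  apply Units.ext
  show (Complex.exp a)⁻¹ = Complex.exp (-a)
  rw [Complex.exp_neg]

lemma Smap_central (u : ℂˣ) (x : (RMat N)ˣ) : Smap N u * x = x * Smap N u := by
  apply Units.ext
  simp only [Units.val_mul]
  show (algebraMap ℂ (RMat N) u) * (x : RMat N) = (x : RMat N) * (algebraMap ℂ (RMat N) u)
  exact (Algebra.commutes _ _)

end grouppart

noncomputable def DeltaInvMat (N : ℕ) : Matrix (Fin N) (Fin N) ℂ :=
  Matrix.diagonal fun n => Complex.exp (-(2 * Real.pi * Complex.I * (n : ℕ) / N))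

lemma delta_mul_deltaInv (N : ℕ) : DeltaMat N * DeltaInvMat N = 1 := by
  rw [DeltaMat, DeltaInvMat, Matrix.diagonal_mul_diagonal]
  apply Matrix.ext; intro i j
  rw [Matrix.diagonal_apply, Matrix.one_apply]
  by_cases h : i = j
  · rw [if_pos h, if_pos h, ← Complex.exp_add, add_neg_cancel, Complex.exp_zero]
  · rw [if_neg h, if_neg h]

lemma deltaInv_mul_delta (N : ℕ) : DeltaInvMat N * DeltaMat N = 1 :=
  mul_eq_one_comm.mp (delta_mul_deltaInv N)

set_option maxHeartbeats 2000000 in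
theorem stmt9 (N : ℕ) (hN : 0 < N) (hNeven : Even N) (k l : ℤ) :
    PhiMat N * DeltaMat N ^ k * PiMat N ^ l * (PhiMat N)ᴴ =
      Complex.exp (-(Real.pi * Complex.I * (k : ℂ) ^ 2 / N)) •
        (DeltaMat N ^ k * PiMat N ^ (k + l)) := by
  haveI : NeZero N := ⟨hN.ne'⟩
  set p : (RMat N)ˣ := ⟨PhiMat N, (PhiMat N)ᴴ, phi_mul_phiH N hN,
    mul_eq_one_comm.mp (phi_mul_phiH N hN)⟩ with hp
  set q : (RMat N)ˣ := ⟨PiMat N, (PiMat N)ᵀ, pi_mul_piT,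
    mul_eq_one_comm.mp pi_mul_piT⟩ with hq
  set d : (RMat N)ˣ := ⟨DeltaMat N, DeltaInvMat N, delta_mul_deltaInv N,
    deltaInv_mul_delta N⟩ with hd
  set S : ℂˣ →* (RMat N)ˣ := Smap N with hS
  have hsmul : ∀ (w : ℂ) (A : RMat N), w • A = (algebraMap ℂ (RMat N) w) * A := by
    intro w A; rw [Algebra.smul_def]
  have hcen3 : ∀ (u : ℂˣ) (x y : (RMat N)ˣ), x * (S u * y) = S u * (x * y) :=
    fun u x y => by rw [← mul_assoc, ← Smap_central, mul_assoc]
  have hE0 : Eu (0:ℂ) = 1 := Units.ext Complex.exp_zero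
  have hSE : ∀ {x y : ℂ} (Z : (RMat N)ˣ), x = y → S (Eu x) * Z = S (Eu y) * Z :=
    fun Z h => by rw [h]
  have hcomb : ∀ (a b c : ℂ) (X : (RMat N)ˣ),
      S (Eu a) * (S (Eu b) * (S (Eu c) * X)) = S (Eu (a+b+c)) * X := by
    intro a b c X
    rw [← mul_assoc, ← mul_assoc, ← _root_.map_mul, ← Eu_add, ← _root_.map_mul, ← Eu_add]
  have hmain : ∀ (u v : ℂˣ) (A B C D : (RMat N)ˣ),
      (S u * (A*B)) * (S v * (C*D)) = (S u * S v) * (A * (B * C) * D) := by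
    intro u v A B C D
    rw [mul_assoc (S u), hcen3, ← mul_assoc (S u) (S v)]
    simp only [mul_assoc]
  have hrel1 : p * d = S (Eu (-(Real.pi*I/N))) * (d * (q * p)) := by
    apply Units.ext
    show PhiMat N * DeltaMat N = algebraMap ℂ (RMat N) (Complex.exp (-(Real.pi*I/N))) *
      (DeltaMat N * (PiMat N * PhiMat N))
    rw [← hsmul]
    exact phi_mul_delta N hN hNeven
  have hrel2 : p * q = q * p := Units.ext (phi_mul_pi N hN hNeven)
  have hrel3 : q * d = S (Eu (-(2*Real.pi*I/N))) * (d * q) := by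
    apply Units.ext
    show PiMat N * DeltaMat N = algebraMap ℂ (RMat N) (Complex.exp (-(2*Real.pi*I/N))) *
      (DeltaMat N * PiMat N)
    rw [← hsmul]
    exact pi_mul_delta N hN
  -- commuting powers of q past d
  have hB : ∀ j : ℤ, q ^ j * d = S (Eu (-(2*Real.pi*I*(j:ℂ)/N))) * (d * q ^ j) := by
    intro j
    induction j using Int.induction_on with
    | zero =>
      rw [zpow_zero, one_mul, mul_one]
      rw [show -(2*(Real.pi:ℂ)*I*(((0:ℤ)):ℂ)/N) = 0 from by push_cast; ring, hE0,
        _root_.map_one, one_mul]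
    | succ i ih =>
      calc q ^ ((i:ℤ)+1) * d
          = q ^ (i:ℤ) * (q * d) := by rw [_root_.zpow_add_one, mul_assoc]
        _ = q ^ (i:ℤ) * (S (Eu (-(2*Real.pi*I/N))) * (d * q)) := by rw [hrel3]
        _ = S (Eu (-(2*Real.pi*I/N))) * (q ^ (i:ℤ) * d * q) := by
            rw [hcen3]; simp only [mul_assoc]
        _ = S (Eu (-(2*Real.pi*I/N))) * (S (Eu (-(2*Real.pi*I*((i:ℤ):ℂ)/N))) * (d * q ^ (i:ℤ)) * q) := by
            rw [ih]
        _ = S (Eu (-(2*Real.pi*I/N)) * Eu (-(2*Real.pi*I*((i:ℤ):ℂ)/N))) * (d * (q ^ (i:ℤ) * q)) := by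
            simp only [_root_.map_mul, mul_assoc]
        _ = S (Eu (-(2*Real.pi*I*((((i:ℤ)+1 : ℤ)):ℂ)/N))) * (d * q ^ ((i:ℤ)+1)) := by
            rw [← Eu_add, _root_.zpow_add_one]
            exact hSE _ (by push_cast; ring)
    | pred i ih =>
      have hrel3' : q⁻¹ * d = S (Eu (2*Real.pi*I/N)) * (d * q⁻¹) := by
        have h1 : d * q = S (Eu (2*Real.pi*I/N)) * (q * d) := by
          rw [hrel3, ← mul_assoc, ← _root_.map_mul, ← Eu_add,
            show (2*(Real.pi:ℂ)*I/N) + -(2*Real.pi*I/N) = 0 from by ring, hE0,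
            _root_.map_one, one_mul]
        calc q⁻¹ * d = q⁻¹ * (d * q) * q⁻¹ := by group
          _ = q⁻¹ * (S (Eu (2*Real.pi*I/N)) * (q * d)) * q⁻¹ := by rw [h1]
          _ = S (Eu (2*Real.pi*I/N)) * (d * q⁻¹) := by
              rw [hcen3]; group
      calc q ^ (-(i:ℤ)-1) * d
          = q⁻¹ * (q ^ (-(i:ℤ)) * d) := by group
        _ = q⁻¹ * (S (Eu (-(2*Real.pi*I*(((-(i:ℤ) : ℤ)):ℂ)/N))) * (d * q ^ (-(i:ℤ)))) := by
            rw [ih]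
        _ = S (Eu (-(2*Real.pi*I*(((-(i:ℤ) : ℤ)):ℂ)/N))) * (q⁻¹ * d * q ^ (-(i:ℤ))) := by
            rw [hcen3]; simp only [mul_assoc]
        _ = S (Eu (-(2*Real.pi*I*(((-(i:ℤ) : ℤ)):ℂ)/N))) *
              (S (Eu (2*Real.pi*I/N)) * (d * q⁻¹) * q ^ (-(i:ℤ))) := by rw [hrel3']
        _ = S (Eu (-(2*Real.pi*I*(((-(i:ℤ) : ℤ)):ℂ)/N)) * Eu (2*Real.pi*I/N)) *
              (d * (q⁻¹ * q ^ (-(i:ℤ)))) := by simp only [_root_.map_mul, mul_assoc]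
        _ = S (Eu (-(2*Real.pi*I*(((-(i:ℤ)-1 : ℤ)):ℂ)/N))) * (d * q ^ (-(i:ℤ)-1)) := by
            rw [← Eu_add, show q⁻¹ * q ^ (-(i:ℤ)) = q ^ (-(i:ℤ)-1) from by group]
            exact hSE _ (by push_cast; ring)
  have hBinv : ∀ j : ℤ, q ^ j * d⁻¹ = S (Eu (2*Real.pi*I*(j:ℂ)/N)) * (d⁻¹ * q ^ j) := by
    intro j
    have h := hB (-j)
    have h3 : d * q^(-j) = (S (Eu (-(2*Real.pi*I*(((-j : ℤ)):ℂ)/N))))⁻¹ * (q^(-j) * d) := by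
      rw [h]; group
    calc q ^ j * d⁻¹ = (d * q ^ (-j))⁻¹ := by group
      _ = ((S (Eu (-(2*Real.pi*I*(((-j : ℤ)):ℂ)/N))))⁻¹ * (q^(-j) * d))⁻¹ := by rw [h3]
      _ = (q^(-j) * d)⁻¹ * S (Eu (-(2*Real.pi*I*(((-j : ℤ)):ℂ)/N))) := by
          rw [_root_.mul_inv_rev, inv_inv]
      _ = S (Eu (-(2*Real.pi*I*(((-j : ℤ)):ℂ)/N))) * (d⁻¹ * q ^ j) := by
          rw [← Smap_central]; group; rfl
      _ = S (Eu (2*Real.pi*I*(j:ℂ)/N)) * (d⁻¹ * q ^ j) := hSE _ (by push_cast; ring)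
  -- conjugation by p
  have hCd : p * d * p⁻¹ = S (Eu (-(Real.pi*I/N))) * (d * q) := by
    rw [hrel1]
    simp only [mul_assoc, mul_inv_cancel, mul_one]
  have hCq : ∀ j : ℤ, p * q ^ j * p⁻¹ = q ^ j := by
    intro j
    have h : p * q * p⁻¹ = q := by
      rw [hrel2]; simp only [mul_assoc, mul_inv_cancel, mul_one]
    have h2 := _root_.map_zpow (MulAut.conj p) q j
    simp only [MulAut.conj_apply] at h2
    rw [h2, h]
  have hCd' : p * d⁻¹ * p⁻¹ = S (Eu (Real.pi*I/N)) * (q⁻¹ * d⁻¹) := by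
    have h1 : p * d⁻¹ * p⁻¹ = (p * d * p⁻¹)⁻¹ := by group
    rw [h1, hCd, _root_.mul_inv_rev, _root_.mul_inv_rev, ← _root_.map_inv, Eu_inv, neg_neg, ← Smap_central]
  have hC : ∀ j : ℤ, p * d ^ j * p⁻¹ = S (Eu (-(Real.pi*I*(j:ℂ)^2/N))) * (d ^ j * q ^ j) := by
    intro j
    induction j using Int.induction_on with
    | zero =>
      rw [zpow_zero, zpow_zero, mul_one, mul_inv_cancel,
        show -((Real.pi:ℂ)*I*(((0:ℤ)):ℂ)^2/N) = 0 from by push_cast; ring, hE0,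
        _root_.map_one, one_mul, mul_one]
    | succ i ih =>
      have e1 : p * d ^ ((i:ℤ)+1) * p⁻¹ = (p * d ^ (i:ℤ) * p⁻¹) * (p * d * p⁻¹) := by
        rw [_root_.zpow_add_one]; group
      rw [e1, ih, hCd, hmain, hB (i:ℤ)]
      simp only [mul_assoc]
      rw [hcen3 _ (d ^ (i:ℤ)), hcomb,
        show d^(i:ℤ) * (d * (q^(i:ℤ) * q)) = d^((i:ℤ)+1) * q^((i:ℤ)+1) from by
          rw [← mul_assoc, ← _root_.zpow_add_one, ← _root_.zpow_add_one]]
      exact hSE _ (by push_cast; ring)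
    | pred i ih =>
      have e1 : p * d ^ (-(i:ℤ)-1) * p⁻¹ = (p * d ^ (-(i:ℤ)) * p⁻¹) * (p * d⁻¹ * p⁻¹) := by
        rw [_root_.zpow_sub_one]; group
      rw [e1, ih, hCd', hmain,
        show q^(-(i:ℤ)) * q⁻¹ = q^(-(i:ℤ)-1) from (zpow_sub_one q _).symm,
        mul_assoc (d^(-(i:ℤ))), hBinv (-(i:ℤ)-1)]
      simp only [mul_assoc]
      rw [hcen3 _ (d ^ (-(i:ℤ))), hcomb,
        show d^(-(i:ℤ)) * (d⁻¹ * q^(-(i:ℤ)-1)) = d^(-(i:ℤ)-1) * q^(-(i:ℤ)-1) from by group]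
      exact hSE _ (by push_cast; ring)
  have key : p * d ^ k * q ^ l * p⁻¹ =
      S (Eu (-(Real.pi*I*(k:ℂ)^2/N))) * (d ^ k * q ^ (k+l)) := by
    have e : p * d ^ k * q ^ l * p⁻¹ = (p * d ^ k * p⁻¹) * (p * q ^ l * p⁻¹) := by group
    rw [e, hC k, hCq l, mul_assoc, mul_assoc (d ^ k), ← _root_.zpow_add]
  calc PhiMat N * DeltaMat N ^ k * PiMat N ^ l * (PhiMat N)ᴴ
      = ↑(p * d ^ k * q ^ l * p⁻¹) := by
        rw [Units.val_mul, Units.val_mul, Units.val_mul,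
          Matrix.coe_units_zpow, Matrix.coe_units_zpow]
        rfl
    _ = ↑(S (Eu (-(Real.pi*I*(k:ℂ)^2/N))) * (d ^ k * q ^ (k+l))) := by rw [key]
    _ = Complex.exp (-(Real.pi * Complex.I * (k : ℂ) ^ 2 / N)) •
          (DeltaMat N ^ k * PiMat N ^ (k + l)) := by
        rw [Units.val_mul, Units.val_mul, Matrix.coe_units_zpow, Matrix.coe_units_zpow, hsmul]
        rfl
end

section
/- Let N be a positive even integer, κ a real number that is not an integer, and k, l integers. Let Φ be the N×N discrete Fresnel transform matrix with entries Φ_{m,n} = (1/√N)·exp(−i·π/4)·exp(i·π·(m−n)²/N), Δ the N×N diagonal matrix with Δ_{n,n} = exp(i·2π·n/N), Π the N×N cyclic-shift permutation matrix with Π_{m,n} = 1 if m ≡ n+1 (mod N) and 0 otherwise, and D_κ the diagonal matrix with (D_κ)_{n,n} = exp(i·2π·κ·n/N). For each integer m set λ_m = (1/N)·(exp(i·2π·κ) − 1)/(exp(i·2π·(κ−m)/N) − 1). Then Φ·Δ^k·D_κ·Π^l·Φ^H = Σ_{m=−N/2}^{N/2−1} λ_m·exp(−i·π·(k+m)²/N)·Δ^{k+m}·Π^{k+m+l},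 where Φ^H is the conjugate transpose of Φ and the matrix powers are integer powers of the invertible matrices Δ and Π. -/
open Matrix Complex Real

/-- The diagonal fractional-Doppler matrix D_κ with (D_κ)_{n,n} = exp(i·2π·κ·n/N). -/
noncomputable def DFracMat (N : ℕ) (κ : ℝ) : Matrix (Fin N) (Fin N) ℂ :=
  Matrix.diagonal fun n =>
    Complex.exp (2 * Real.pi * Complex.I * (κ : ℂ) * ((n : ℕ) : ℂ) / N)

namespace Stmt14Aux

lemma matrix_zpow_eq {n' : Type*} [DecidableEq n'] [Fintype n'] {M : Matrix n' n' ℂ}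
    (h : IsUnit M.det) (F : ℤ → Matrix n' n' ℂ)
    (h0 : F 0 = 1) (hstep : ∀ j : ℤ, F (j + 1) = F j * M) :
    ∀ j : ℤ, M ^ j = F j := by
  intro j
  induction j using Int.induction_on with
  | zero => simpa using h0.symm
  | succ i ih => rw [Matrix.zpow_add_one h, ih, ← hstep]
  | pred i ih =>
    rw [Matrix.zpow_sub_one h, ih]
    have h2 := hstep (-(i : ℤ) - 1)
    rw [sub_add_cancel] at h2
    rw [h2, Matrix.mul_assoc, Matrix.mul_nonsing_inv _ h, Matrix.mul_one]

lemma delta_det_isUnit (N : ℕ) : IsUnit (DeltaMat N).det := by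
  apply Matrix.isUnit_det_of_left_inverse
    (B := Matrix.diagonal fun n : Fin N =>
      Complex.exp (-(2 * Real.pi * Complex.I * ((n : ℕ) : ℂ) / N)))
  rw [DeltaMat, Matrix.diagonal_mul_diagonal]
  have : ∀ n : Fin N,
      Complex.exp (-(2 * Real.pi * Complex.I * ((n : ℕ) : ℂ) / N)) *
        Complex.exp (2 * Real.pi * Complex.I * ((n : ℕ) : ℂ) / N) = 1 := fun n => by
    rw [← Complex.exp_add]; simp
  simp only [this, Matrix.diagonal_one]

lemma delta_zpow (N : ℕ) (j : ℤ) :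
    DeltaMat N ^ j = Matrix.diagonal fun n : Fin N =>
      Complex.exp (2 * Real.pi * Complex.I * (j : ℂ) * ((n : ℕ) : ℂ) / N) := by
  refine matrix_zpow_eq (delta_det_isUnit N)
    (fun j => Matrix.diagonal fun n : Fin N =>
      Complex.exp (2 * Real.pi * Complex.I * (j : ℂ) * ((n : ℕ) : ℂ) / N)) ?_ ?_ j
  · simp
  · intro j
    rw [DeltaMat, Matrix.diagonal_mul_diagonal]
    refine congrArg Matrix.diagonal (funext fun n => ?_)
    rw [← Complex.exp_add]
    congr 1
    push_cast
    ring

lemma succ_mod_inj {N : ℕ} (p q : Fin N) :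
    ((p : ℕ) + 1) % N = ((q : ℕ) + 1) % N ↔ p = q := by
  constructor
  · intro h
    have hp := p.isLt
    have hq := q.isLt
    apply Fin.ext
    rcases Nat.lt_or_ge ((p : ℕ) + 1) N with h1 | h1
    · rcases Nat.lt_or_ge ((q : ℕ) + 1) N with h2 | h2
      · rw [Nat.mod_eq_of_lt h1, Nat.mod_eq_of_lt h2] at h; omega
      · have : (q : ℕ) + 1 = N := by omega
        rw [Nat.mod_eq_of_lt h1, this, Nat.mod_self] at h; omega
    · have hp1 : (p : ℕ) + 1 = N := by omega
      rcases Nat.lt_or_ge ((q : ℕ) + 1) N with h2 | h2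
      · rw [hp1, Nat.mod_self, Nat.mod_eq_of_lt h2] at h; omega
      · omega
  · rintro rfl; rfl

lemma pi_det_isUnit {N : ℕ} (hN : 0 < N) : IsUnit (PiMat N).det := by
  apply Matrix.isUnit_det_of_left_inverse (B := (PiMat N)ᵀ)
  ext p q
  rw [Matrix.mul_apply, Matrix.one_apply]
  have hlt : ((p : ℕ) + 1) % N < N := Nat.mod_lt _ hN
  let r0 : Fin N := ⟨((p : ℕ) + 1) % N, hlt⟩
  rw [Finset.sum_eq_single r0]
  · have h1 : (PiMat N)ᵀ p r0 = 1 := by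
      simp [PiMat, Matrix.transpose_apply, r0]
    rw [h1, one_mul]
    show (if ((r0 : ℕ) = ((q : ℕ) + 1) % N) then (1:ℂ) else 0) = _
    by_cases h : p = q
    · subst h; simp [r0]
    · rw [if_neg, if_neg h]
      intro hc
      exact h ((succ_mod_inj p q).mp hc)
  · intro b _ hb
    have : ¬ ((b : ℕ) = ((p : ℕ) + 1) % N) := by
      intro hc
      exact hb (Fin.ext hc)
    simp [Matrix.transpose_apply, PiMat, this]
  · intro h; exact absurd (Finset.mem_univ r0) h

/-- entries of integer powers of `PiMat`. -/
lemma pi_zpow {N : ℕ} (hN : 0 < N) (j : ℤ) :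
    PiMat N ^ j = Matrix.of fun p q : Fin N =>
      if ((p : ℕ) - (q : ℕ) - j : ℤ) % N = 0 then 1 else 0 := by
  refine matrix_zpow_eq (pi_det_isUnit hN)
    (fun j => Matrix.of fun p q : Fin N =>
      if ((p : ℕ) - (q : ℕ) - j : ℤ) % N = 0 then 1 else 0) ?_ ?_ j
  · ext p q
    show (if (((p:ℕ):ℤ) - ((q:ℕ):ℤ) - (0:ℤ)) % N = 0 then (1:ℂ) else 0)
      = (1 : Matrix (Fin N) (Fin N) ℂ) p q
    rw [Matrix.one_apply]
    by_cases h : p = q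
    · subst h; simp
    · rw [if_neg, if_neg h]
      intro hc
      have hd : (N : ℤ) ∣ ((p : ℕ) - (q : ℕ) - 0 : ℤ) := Int.dvd_of_emod_eq_zero hc
      have : ((p : ℕ) - (q : ℕ) - 0 : ℤ) = 0 := by
        refine Int.eq_zero_of_abs_lt_dvd hd ?_
        have hp := p.isLt; have hq := q.isLt
        rw [abs_lt]
        constructor <;> omega
      have : (p : ℕ) = (q : ℕ) := by omega
      exact h (Fin.ext this)
  · intro j
    ext p q
    rw [Matrix.mul_apply]
    have hlt : ((q : ℕ) + 1) % N < N := Nat.mod_lt _ hN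
    let r0 : Fin N := ⟨((q : ℕ) + 1) % N, hlt⟩
    rw [Finset.sum_eq_single r0]
    · simp only [Matrix.of_apply, PiMat, r0]
      rw [if_true, mul_one]
      have hcast : ((((q : ℕ) + 1) % N : ℕ) : ℤ) = ((q : ℕ) + 1 : ℤ) % N := by
        push_cast
        ring
      have key : ((p : ℕ) - ((((q : ℕ) + 1) % N : ℕ) : ℤ) - j) % N
          = ((p : ℕ) - (q : ℕ) - (j + 1) : ℤ) % N := by
        rw [hcast]
        conv_lhs => rw [show (((p:ℕ):ℤ) - (((q:ℕ):ℤ) + 1) % N - j)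
          = ((((p:ℕ):ℤ) - j) - (((q:ℕ):ℤ) + 1) % N) from by ring]
        conv_rhs => rw [show (((p:ℕ):ℤ) - ((q:ℕ):ℤ) - (j + 1))
          = ((((p:ℕ):ℤ) - j) - (((q:ℕ):ℤ) + 1)) from by ring]
        rw [Int.sub_emod, Int.sub_emod (((p:ℕ):ℤ) - j) (((q:ℕ):ℤ) + 1),
          Int.emod_emod_of_dvd _ (dvd_refl (N:ℤ))]
      rw [key]
    · intro b _ hb
      have : ¬ ((b : ℕ) = ((q : ℕ) + 1) % N) := fun hc => hb (Fin.ext hc)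
      simp [PiMat, this]
    · intro h; exact absurd (Finset.mem_univ r0) h

/-- since N is even, exp(iπx²/N) only depends on x mod N. -/
lemma sq_phase_congr {N : ℕ} (hN : 0 < N) (hNeven : Even N) {x y : ℤ}
    (h : (N : ℤ) ∣ (x - y)) :
    Complex.exp (-(Real.pi * Complex.I * ((x : ℤ) : ℂ) ^ 2 / N)) =
      Complex.exp (-(Real.pi * Complex.I * ((y : ℤ) : ℂ) ^ 2 / N)) := by
  obtain ⟨t, ht⟩ := h
  obtain ⟨u, hu⟩ := hNeven
  have hu0 : u ≠ 0 := by omega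
  have huC : ((u : ℕ) : ℂ) ≠ 0 := Nat.cast_ne_zero.mpr hu0
  have hNu : ((N : ℕ) : ℂ) = 2 * (u : ℂ) := by rw [hu]; push_cast; ring
  have hx : ((x : ℤ) : ℂ) = ((y : ℤ) : ℂ) + (N : ℂ) * (t : ℂ) := by
    have hxy : x = y + (N : ℤ) * t := by linarith
    rw [hxy]; push_cast; ring
  rw [hx]
  calc Complex.exp (-(Real.pi * Complex.I * (((y:ℤ):ℂ) + (N:ℂ) * t) ^ 2 / N))
      = Complex.exp (-(Real.pi * Complex.I * ((y:ℤ):ℂ) ^ 2 / N)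
          + ((-(y * t) - (u : ℤ) * t ^ 2 : ℤ) : ℂ) * (2 * Real.pi * Complex.I)) := by
        congr 1
        rw [hNu]
        push_cast
        field_simp
        ring
    _ = Complex.exp (-(Real.pi * Complex.I * ((y:ℤ):ℂ) ^ 2 / N)) := by
        rw [Complex.exp_add, Complex.exp_int_mul_two_pi_mul_I, mul_one]

/-- exp(2πi·a·c/N) only depends on a mod N. -/
lemma lin_phase_congr {N : ℕ} (hN : 0 < N) {x y : ℤ} (h : (N : ℤ) ∣ (x - y)) (c : ℕ) :
    Complex.exp (2 * Real.pi * Complex.I * ((x : ℤ) : ℂ) * (c : ℂ) / N) =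
      Complex.exp (2 * Real.pi * Complex.I * ((y : ℤ) : ℂ) * (c : ℂ) / N) := by
  obtain ⟨t, ht⟩ := h
  have hNC : ((N : ℕ) : ℂ) ≠ 0 := Nat.cast_ne_zero.mpr hN.ne'
  have hx : ((x : ℤ) : ℂ) = ((y : ℤ) : ℂ) + (N : ℂ) * (t : ℂ) := by
    have hxy : x = y + (N : ℤ) * t := by linarith
    rw [hxy]; push_cast; ring
  rw [hx]
  calc Complex.exp (2 * Real.pi * Complex.I * (((y:ℤ):ℂ) + (N:ℂ) * t) * c / N)
      = Complex.exp (2 * Real.pi * Complex.I * ((y:ℤ):ℂ) * c / N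
          + ((t * c : ℤ) : ℂ) * (2 * Real.pi * Complex.I)) := by
        congr 1
        push_cast
        field_simp
    _ = _ := by rw [Complex.exp_add, Complex.exp_int_mul_two_pi_mul_I, mul_one]

/-- exp(2πi(κ−x)/N) only depends on x mod N. -/
lemma frac_phase_congr {N : ℕ} (hN : 0 < N) (κ : ℝ) {x y : ℤ} (h : (N : ℤ) ∣ (x - y)) :
    Complex.exp (2 * Real.pi * Complex.I * ((κ : ℂ) - ((x : ℤ) : ℂ)) / N) =
      Complex.exp (2 * Real.pi * Complex.I * ((κ : ℂ) - ((y : ℤ) : ℂ)) / N) := by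
  obtain ⟨t, ht⟩ := h
  have hNC : ((N : ℕ) : ℂ) ≠ 0 := Nat.cast_ne_zero.mpr hN.ne'
  have hx : ((x : ℤ) : ℂ) = ((y : ℤ) : ℂ) + (N : ℂ) * (t : ℂ) := by
    have hxy : x = y + (N : ℤ) * t := by linarith
    rw [hxy]; push_cast; ring
  rw [hx]
  calc Complex.exp (2 * Real.pi * Complex.I * ((κ:ℂ) - (((y:ℤ):ℂ) + (N:ℂ) * t)) / N)
      = Complex.exp (2 * Real.pi * Complex.I * ((κ:ℂ) - ((y:ℤ):ℂ)) / N
          + ((-t : ℤ) : ℂ) * (2 * Real.pi * Complex.I)) := by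
        congr 1
        push_cast
        field_simp
        ring
    _ = _ := by rw [Complex.exp_add, Complex.exp_int_mul_two_pi_mul_I, mul_one]

lemma star_phi (N : ℕ) (a b : Fin N) :
    star (PhiMat N a b) = (1 / Real.sqrt N : ℂ) *
      Complex.exp ((Real.pi / 4 : ℂ) * Complex.I) *
      Complex.exp (-(Real.pi * Complex.I * (((a : ℕ) : ℤ) - ((b : ℕ) : ℤ)) ^ 2 / N)) := by
  simp only [PhiMat, Matrix.of_apply, star_mul', Complex.star_def, ← Complex.exp_conj,
    _root_.map_mul, map_div₀, _root_.map_one, map_pow, map_sub, map_neg, Complex.conj_I,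
    Complex.conj_ofReal, map_intCast, map_natCast, map_ofNat]
  ring_nf

end Stmt14Aux

open Stmt14Aux

theorem stmt14 (N : ℕ) (hN : 0 < N) (hNeven : Even N) (κ : ℝ)
    (hκ : ∀ z : ℤ, κ ≠ (z : ℝ)) (k l : ℤ)
    (lam : ℤ → ℂ)
    (hlam : ∀ m : ℤ,
      lam m = (1 / N : ℂ) * (Complex.exp (2 * Real.pi * Complex.I * (κ : ℂ)) - 1) /
        (Complex.exp (2 * Real.pi * Complex.I * ((κ : ℂ) - (m : ℂ)) / N) - 1)) :
    PhiMat N * (DeltaMat N ^ k * DFracMat N κ * PiMat N ^ l) * (PhiMat N)ᴴ =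
      ∑ m ∈ Finset.Icc (-(N : ℤ) / 2) ((N : ℤ) / 2 - 1),
        (lam m * Complex.exp (-(Real.pi * Complex.I * ((k + m : ℤ) : ℂ) ^ 2 / N))) •
          (DeltaMat N ^ (k + m) * PiMat N ^ (k + m + l)) := by
  have hNZ : (N : ℤ) ≠ 0 := by exact_mod_cast hN.ne'
  have hNZpos : (0 : ℤ) < N := by exact_mod_cast hN
  have hNC : (N : ℂ) ≠ 0 := Nat.cast_ne_zero.mpr hN.ne'
  have hN2 : (N : ℤ) % 2 = 0 := by obtain ⟨u, hu⟩ := hNeven; omega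
  ext p q
  set d : ℤ := ((p : ℕ) : ℤ) - ((q : ℕ) : ℤ) - l with hd
  set r : ℂ := Complex.exp (2 * Real.pi * Complex.I * ((κ : ℂ) + (k : ℂ) - (d : ℂ)) / N)
    with hr
  -- r ≠ 1 since κ is not an integer
  have hr1 : r ≠ 1 := by
    rw [hr]
    intro hone
    rw [Complex.exp_eq_one_iff] at hone
    obtain ⟨n, hn⟩ := hone
    have hI : (2 * (Real.pi : ℂ) * Complex.I) ≠ 0 := by
      simp [Real.pi_ne_zero, Complex.I_ne_zero]
    rw [div_eq_iff hNC] at hn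
    have h2 : (κ : ℂ) + (k : ℂ) - (d : ℂ) = (n : ℂ) * (N : ℂ) := by
      apply mul_left_cancel₀ hI
      linear_combination hn
    have h4 : κ + (k : ℝ) - (d : ℝ) = (n : ℝ) * (N : ℝ) := by exact_mod_cast h2
    apply hκ (n * N - k + d)
    push_cast
    linarith
  have hrN : r ^ N = Complex.exp (2 * Real.pi * Complex.I * (κ : ℂ)) := by
    rw [hr, ← Complex.exp_nat_mul]
    calc Complex.exp ((N : ℂ) * (2 * Real.pi * Complex.I * ((κ : ℂ) + (k : ℂ) - (d : ℂ)) / N))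
        = Complex.exp (2 * Real.pi * Complex.I * (κ : ℂ)
            + ((k - d : ℤ) : ℂ) * (2 * Real.pi * Complex.I)) := by
          congr 1
          push_cast
          field_simp
          ring
      _ = _ := by rw [Complex.exp_add, Complex.exp_int_mul_two_pi_mul_I, mul_one]
  -- the unique index m0 in the Doppler window
  set m0 : ℤ := (d - k + (N : ℤ) / 2) % N - (N : ℤ) / 2 with hm0
  have he1 : 0 ≤ (d - k + (N : ℤ) / 2) % N := Int.emod_nonneg _ hNZ
  have he2 : (d - k + (N : ℤ) / 2) % N < N := Int.emod_lt_of_pos _ hNZpos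
  have hm0mem : m0 ∈ Finset.Icc (-(N : ℤ) / 2) ((N : ℤ) / 2 - 1) := by
    rw [Finset.mem_Icc, hm0]
    generalize (d - k + (N : ℤ) / 2) % N = e at he1 he2 ⊢
    omega
  have hm0dvd : (N : ℤ) ∣ (d - k - m0) :=
    ⟨(d - k + (N : ℤ) / 2) / N, by rw [hm0, Int.emod_def]; ring⟩
  -- entries of the middle matrix
  have hA : ∀ m n : Fin N, (DeltaMat N ^ k * DFracMat N κ * PiMat N ^ l) m n
      = (Complex.exp (2 * Real.pi * Complex.I * (k : ℂ) * ((m : ℕ) : ℂ) / N) *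
          Complex.exp (2 * Real.pi * Complex.I * (κ : ℂ) * ((m : ℕ) : ℂ) / N)) *
        (if ((m : ℕ) - (n : ℕ) - l : ℤ) % N = 0 then 1 else 0) := by
    intro m n
    rw [delta_zpow, pi_zpow hN, DFracMat, Matrix.diagonal_mul_diagonal, Matrix.diagonal_mul]
    rfl
  -- the unique column index
  have hlt : ∀ m : Fin N, ((((m : ℕ) : ℤ) - l) % N).toNat < N := by
    intro m
    have h1 : 0 ≤ (((m : ℕ) : ℤ) - l) % N := Int.emod_nonneg _ hNZ
    have h2 : (((m : ℕ) : ℤ) - l) % N < N := Int.emod_lt_of_pos _ hNZpos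
    omega
  let n1 : Fin N → Fin N := fun m => ⟨((((m : ℕ) : ℤ) - l) % N).toNat, hlt m⟩
  have hn1val : ∀ m : Fin N, (((n1 m : Fin N) : ℕ) : ℤ) = (((m : ℕ) : ℤ) - l) % N := fun m =>
    Int.toNat_of_nonneg (Int.emod_nonneg _ hNZ)
  have hn1dvd : ∀ m : Fin N, (N : ℤ) ∣ (((m : ℕ) : ℤ) - ((n1 m : Fin N) : ℕ) - l) := by
    intro m
    refine ⟨((((m : ℕ) : ℤ) - l)) / N, ?_⟩
    rw [hn1val m, Int.emod_def]
    ring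
  have hs : (1 / (Real.sqrt N : ℂ)) * (1 / (Real.sqrt N : ℂ)) = 1 / (N : ℂ) := by
    rw [div_mul_div_comm, one_mul, ← Complex.ofReal_mul,
      Real.mul_self_sqrt (Nat.cast_nonneg N)]
    norm_num
  -- collapse of the inner sum in the LHS, and the per-row geometric term
  have hinner : ∀ m : Fin N,
      (∑ n : Fin N, PhiMat N p m * (DeltaMat N ^ k * DFracMat N κ * PiMat N ^ l) m n *
        star (PhiMat N q n))
      = (1 / (N : ℂ)) *
          Complex.exp (Real.pi * Complex.I * (d : ℂ) *
            (((p : ℕ) : ℂ) + ((q : ℕ) : ℂ) + (l : ℂ)) / N) * r ^ (m : ℕ) := by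
    intro m
    rw [Finset.sum_eq_single (n1 m)]
    · rw [hA m (n1 m), if_pos (Int.emod_eq_zero_of_dvd (hn1dvd m)), mul_one, star_phi]
      have hsq : Complex.exp (-(Real.pi * Complex.I *
            (((((q : ℕ) : ℤ)) : ℂ) - ((((n1 m : Fin N) : ℕ) : ℤ) : ℂ)) ^ 2 / N))
          = Complex.exp (-(Real.pi * Complex.I *
            ((((q : ℕ) : ℤ) - ((m : ℕ) : ℤ) + l : ℤ) : ℂ) ^ 2 / N)) := by
        rw [show (((((q : ℕ) : ℤ)) : ℂ) - ((((n1 m : Fin N) : ℕ) : ℤ) : ℂ))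
          = ((((q : ℕ) : ℤ) - (((n1 m : Fin N) : ℕ) : ℤ) : ℤ) : ℂ) from by push_cast; ring]
        refine sq_phase_congr hN hNeven ?_
        have h2 := hn1dvd m
        have h' : (((q : ℕ) : ℤ) - (((n1 m : Fin N) : ℕ) : ℤ)) - (((q : ℕ) : ℤ) - ((m : ℕ) : ℤ) + l)
            = (((m : ℕ) : ℤ)) - (((n1 m : Fin N) : ℕ) : ℤ) - l := by ring
        rw [h']
        exact h2
      rw [hsq, hr, ← Complex.exp_nat_mul]
      simp only [PhiMat, Matrix.of_apply]
      trans ((1 / (Real.sqrt N : ℂ)) * (1 / (Real.sqrt N : ℂ))) *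
        (Complex.exp (-(Real.pi / 4) * Complex.I) *
         Complex.exp (Real.pi * Complex.I *
            ((((p : ℕ) : ℤ) : ℂ) - (((m : ℕ) : ℤ) : ℂ)) ^ 2 / N) *
         Complex.exp (2 * Real.pi * Complex.I * (k : ℂ) * ((m : ℕ) : ℂ) / N) *
         Complex.exp (2 * Real.pi * Complex.I * (κ : ℂ) * ((m : ℕ) : ℂ) / N) *
         Complex.exp ((Real.pi / 4 : ℂ) * Complex.I) *
         Complex.exp (-(Real.pi * Complex.I *
            ((((q : ℕ) : ℤ) - ((m : ℕ) : ℤ) + l : ℤ) : ℂ) ^ 2 / N)))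
      · ring
      · rw [hs]
        simp only [mul_assoc, ← Complex.exp_add]
        congr 1
        congr 1
        push_cast [hd]
        ring
    · intro n _ hne
      have hne' : ¬ ((((m : ℕ) : ℤ) - ((n : ℕ) : ℤ) - l) % N = 0) := by
        intro hc
        have h1 : (N : ℤ) ∣ (((m : ℕ) : ℤ) - ((n : ℕ) : ℤ) - l) := Int.dvd_of_emod_eq_zero hc
        have h2 := hn1dvd m
        have h3 : (N : ℤ) ∣ (((n : ℕ) : ℤ) - (((n1 m : Fin N) : ℕ) : ℤ)) := by
          have h4 := dvd_sub h2 h1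
          rwa [show ((((m : ℕ) : ℤ)) - (((n1 m : Fin N) : ℕ) : ℤ) - l)
            - ((((m : ℕ) : ℤ)) - ((n : ℕ) : ℤ) - l)
            = (((n : ℕ) : ℤ) - (((n1 m : Fin N) : ℕ) : ℤ)) from by ring] at h4
        have hnlt := n.isLt
        have hn1lt := (n1 m).isLt
        have h4 : ((n : ℕ) : ℤ) - (((n1 m : Fin N) : ℕ) : ℤ) = 0 := by
          refine Int.eq_zero_of_abs_lt_dvd h3 ?_
          rw [abs_lt]
          constructor <;> omega
        exact hne (Fin.ext (by omega))
      rw [hA m n, if_neg hne', mul_zero, mul_zero, zero_mul]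
    · intro h; exact absurd (Finset.mem_univ (n1 m)) h
  -- closed form of the LHS entry
  have hL : (PhiMat N * (DeltaMat N ^ k * DFracMat N κ * PiMat N ^ l) * (PhiMat N)ᴴ) p q
      = (1 / (N : ℂ)) *
          Complex.exp (Real.pi * Complex.I * (d : ℂ) *
            (((p : ℕ) : ℂ) + ((q : ℕ) : ℂ) + (l : ℂ)) / N) *
          ((Complex.exp (2 * Real.pi * Complex.I * (κ : ℂ)) - 1) / (r - 1)) := by
    rw [Matrix.mul_apply]
    simp only [Matrix.conjTranspose_apply]
    rw [show (∑ x : Fin N, (PhiMat N * (DeltaMat N ^ k * DFracMat N κ * PiMat N ^ l)) p x *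
          star (PhiMat N q x))
        = ∑ x : Fin N, ∑ m : Fin N, PhiMat N p m *
            (DeltaMat N ^ k * DFracMat N κ * PiMat N ^ l) m x * star (PhiMat N q x) from
      Finset.sum_congr rfl (fun x _ => by rw [Matrix.mul_apply, Finset.sum_mul])]
    rw [Finset.sum_comm]
    have hsum := Finset.sum_congr rfl (fun m (_ : m ∈ Finset.univ) => hinner m)
    rw [hsum, ← Finset.mul_sum]
    have hgeom : (∑ m : Fin N, r ^ (m : ℕ))
        = (Complex.exp (2 * Real.pi * Complex.I * (κ : ℂ)) - 1) / (r - 1) := by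
      calc (∑ m : Fin N, r ^ (m : ℕ)) = ∑ i ∈ Finset.range N, r ^ i :=
            Fin.sum_univ_eq_sum_range (fun i => r ^ i) N
        _ = (r ^ N - 1) / (r - 1) := geom_sum_eq hr1 N
        _ = _ := by rw [hrN]
    rw [hgeom]
  -- closed form of the RHS entry
  have hR : (∑ m ∈ Finset.Icc (-(N : ℤ) / 2) ((N : ℤ) / 2 - 1),
        (lam m * Complex.exp (-(Real.pi * Complex.I * ((k + m : ℤ) : ℂ) ^ 2 / N))) •
          (DeltaMat N ^ (k + m) * PiMat N ^ (k + m + l))) p q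
      = lam m0 * Complex.exp (-(Real.pi * Complex.I * ((k + m0 : ℤ) : ℂ) ^ 2 / N)) *
          Complex.exp (2 * Real.pi * Complex.I * ((k + m0 : ℤ) : ℂ) * ((p : ℕ) : ℂ) / N) := by
    rw [Matrix.sum_apply]
    rw [Finset.sum_eq_single m0]
    · rw [Matrix.smul_apply, delta_zpow, pi_zpow hN, Matrix.diagonal_mul]
      simp only [Matrix.of_apply]
      have hcond : ((((p : ℕ) : ℤ)) - (((q : ℕ) : ℤ)) - (k + m0 + l)) % N = 0 := by
        rw [show ((((p : ℕ) : ℤ)) - (((q : ℕ) : ℤ)) - (k + m0 + l)) = d - k - m0 from by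
          rw [hd]; ring]
        exact Int.emod_eq_zero_of_dvd hm0dvd
      rw [if_pos hcond, mul_one, smul_eq_mul, mul_assoc]
    · intro m hm hne
      have hcond : ¬ (((((p : ℕ) : ℤ)) - (((q : ℕ) : ℤ)) - (k + m + l)) % N = 0) := by
        intro hc
        have h1 : (N : ℤ) ∣ (d - k - m) := by
          have h0 := Int.dvd_of_emod_eq_zero hc
          rwa [show ((((p : ℕ) : ℤ)) - (((q : ℕ) : ℤ)) - (k + m + l)) = d - k - m from by
            rw [hd]; ring] at h0
        have h2 : (N : ℤ) ∣ (m - m0) := by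
          have h3 := dvd_sub hm0dvd h1
          rwa [show (d - k - m0) - (d - k - m) = m - m0 from by ring] at h3
        have hb := Finset.mem_Icc.mp hm
        have hb0 := Finset.mem_Icc.mp hm0mem
        have h4 : m - m0 = 0 := Int.eq_zero_of_abs_lt_dvd h2 (by rw [abs_lt]; omega)
        exact hne (by omega)
      rw [Matrix.smul_apply, delta_zpow, pi_zpow hN, Matrix.diagonal_mul]
      simp only [Matrix.of_apply]
      rw [if_neg hcond, mul_zero, smul_zero]
    · intro hnm; exact absurd hm0mem hnm
  -- identification of the denominators
  have hdenom : Complex.exp (2 * Real.pi * Complex.I * ((κ : ℂ) - ((m0 : ℤ) : ℂ)) / N) = r := by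
    have hdvd2 : (N : ℤ) ∣ (m0 - (d - k)) := by
      have h3 := dvd_neg.mpr hm0dvd
      rwa [show -(d - k - m0) = m0 - (d - k) from by ring] at h3
    have h2 := frac_phase_congr hN κ hdvd2
    rw [h2, hr]
    congr 1
    push_cast
    ring
  -- identification of the phases
  have hphase : Complex.exp (-(Real.pi * Complex.I * ((k + m0 : ℤ) : ℂ) ^ 2 / N)) *
        Complex.exp (2 * Real.pi * Complex.I * ((k + m0 : ℤ) : ℂ) * ((p : ℕ) : ℂ) / N)
      = Complex.exp (Real.pi * Complex.I * (d : ℂ) *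
          (((p : ℕ) : ℂ) + ((q : ℕ) : ℂ) + (l : ℂ)) / N) := by
    obtain ⟨t, ht⟩ := hm0dvd
    obtain ⟨u, hu⟩ := hNeven
    have hu0 : ((u : ℕ) : ℂ) ≠ 0 := Nat.cast_ne_zero.mpr (by omega)
    have hNu : ((N : ℕ) : ℂ) = 2 * ((u : ℕ) : ℂ) := by rw [hu]; push_cast; ring
    have hkm : ((k + m0 : ℤ) : ℂ) = (d : ℂ) - (N : ℂ) * (t : ℂ) := by
      have h5 : (k + m0 : ℤ) = d - (N : ℤ) * t := by linarith
      rw [h5]; push_cast; ring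
    rw [← Complex.exp_add, hkm]
    calc Complex.exp (-(Real.pi * Complex.I * ((d : ℂ) - (N : ℂ) * t) ^ 2 / N)
            + 2 * Real.pi * Complex.I * ((d : ℂ) - (N : ℂ) * t) * ((p : ℕ) : ℂ) / N)
        = Complex.exp (Real.pi * Complex.I * (d : ℂ) *
              (((p : ℕ) : ℂ) + ((q : ℕ) : ℂ) + (l : ℂ)) / N
            + ((d * t - (u : ℤ) * t ^ 2 - t * ((p : ℕ) : ℤ) : ℤ) : ℂ) *
              (2 * Real.pi * Complex.I)) := by
          congr 1
          push_cast [hd]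
          rw [hNu]
          field_simp [hu0]
          ring
      _ = _ := by rw [Complex.exp_add, Complex.exp_int_mul_two_pi_mul_I, mul_one]
  rw [hL, hR, hlam m0, hdenom]
  linear_combination (-(1 / (N : ℂ)) *
    (Complex.exp (2 * Real.pi * Complex.I * (κ : ℂ)) - 1) / (r - 1)) * hphase
end
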